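/- arXiv:math/0601754 — 2 statements merged into one kernel-verified Lean document; each statement's English description precedes it below -/
import Mathlib

section
/- Let D₀ be a positive line of (ℂ³,h). Then h is negative definite on the plane D₀^⊥, and the map D ↦ (D, D ⊔ D₀) is a bijection from the set of lines contained in D₀^⊥ onto the set of flags (D,P) such that D is a negative line, P has signature (1,1), and D^⊥ ∩ P = D₀. (The twistor fiber π^{-1}(D₀) is a projective line.) -/
open Complex ComplexConjugate Module

/-- The Hermitian form of signature (1,2) on ℂ³. -/
noncomputable def h (z w : Fin 3 → ℂ) : ℂ :=
  z 0 * conj (w 0) - z 1 * conj (w 1) - z 2 * conj (w 2)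

/-- The orthogonal of a subspace with respect to `h`. -/
noncomputable def perp (V : Submodule ℂ (Fin 3 → ℂ)) : Submodule ℂ (Fin 3 → ℂ) where
  carrier := {z | ∀ v ∈ V, h z v = 0}
  add_mem' := by
    intro a b ha hb v hv
    have ha' := ha v hv
    have hb' := hb v hv
    simp only [h, Pi.add_apply] at ha' hb' ⊢
    linear_combination ha' + hb'
  zero_mem' := by
    intro v hv
    simp [h]
  smul_mem' := by
    intro c x hx v hv
    have hx' := hx v hv
    simp only [h, Pi.smul_apply, smul_eq_mul] at hx' ⊢
    linear_combination c * hx'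

/-- `P` has signature (1,1): it has a basis `(e₁, e₂)` with
`h e₁ e₁ = 1`, `h e₂ e₂ = -1`, `h e₁ e₂ = 0`. -/
def IsSig11 (P : Submodule ℂ (Fin 3 → ℂ)) : Prop :=
  ∃ e₁ e₂ : Fin 3 → ℂ, e₁ ∈ P ∧ e₂ ∈ P ∧
    LinearIndependent ℂ ![e₁, e₂] ∧ Submodule.span ℂ {e₁, e₂} = P ∧
    h e₁ e₁ = 1 ∧ h e₂ e₂ = -1 ∧ h e₁ e₂ = 0



lemma h_conj (z w : Fin 3 → ℂ) : conj (h z w) = h w z := by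
  simp only [h, map_sub, map_mul, Complex.conj_conj]; ring

lemma h_smul_left (c : ℂ) (z w : Fin 3 → ℂ) : h (c • z) w = c * h z w := by
  simp only [h, Pi.smul_apply, smul_eq_mul]; ring

lemma h_smul_right (c : ℂ) (z w : Fin 3 → ℂ) : h z (c • w) = conj c * h z w := by
  simp only [h, Pi.smul_apply, smul_eq_mul, map_mul]; ring

lemma h_add_left (z z' w : Fin 3 → ℂ) : h (z + z') w = h z w + h z' w := by
  simp only [h, Pi.add_apply]; ring

lemma h_smul_smul (c : ℂ) (z : Fin 3 → ℂ) : h (c • z) (c • z) = (Complex.normSq c : ℂ) * h z z := by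
  rw [h_smul_left, h_smul_right, ← mul_assoc, Complex.mul_conj]

lemma h_self (z : Fin 3 → ℂ) :
    h z z = ((Complex.normSq (z 0) - Complex.normSq (z 1) - Complex.normSq (z 2) : ℝ) : ℂ) := by
  simp only [h, Complex.mul_conj, Complex.ofReal_sub]

lemma mem_perp {V : Submodule ℂ (Fin 3 → ℂ)} {z : Fin 3 → ℂ} :
    z ∈ perp V ↔ ∀ v ∈ V, h z v = 0 := Iff.rfl

lemma mem_perp_span {e z : Fin 3 → ℂ} :
    z ∈ perp (Submodule.span ℂ {e}) ↔ h z e = 0 := by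
  constructor
  · intro hz; exact hz e (Submodule.mem_span_singleton_self e)
  · intro hz v hv
    obtain ⟨c, rfl⟩ := Submodule.mem_span_singleton.mp hv
    rw [h_smul_right, hz, mul_zero]

noncomputable def hfun (e : Fin 3 → ℂ) : (Fin 3 → ℂ) →ₗ[ℂ] ℂ where
  toFun z := h z e
  map_add' z z' := h_add_left z z' e
  map_smul' c z := h_smul_left c z e

lemma perp_span_eq (e : Fin 3 → ℂ) :
    perp (Submodule.span ℂ {e}) = LinearMap.ker (hfun e) := by
  ext z; exact mem_perp_span

lemma finrank_perp_span {e : Fin 3 → ℂ} (he : h e e ≠ 0) :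
    finrank ℂ ↥(perp (Submodule.span ℂ {e})) = 2 := by
  rw [perp_span_eq]
  have hsurj : LinearMap.range (hfun e) = ⊤ := by
    rw [LinearMap.range_eq_top]
    intro c
    refine ⟨(c / h e e) • e, ?_⟩
    show h ((c / h e e) • e) e = c
    rw [h_smul_left, div_mul_cancel₀ _ he]
  have := LinearMap.finrank_range_add_finrank_ker (hfun e)
  rw [hsurj] at this
  have h3 : finrank ℂ (Fin 3 → ℂ) = 3 := by simp
  have h1 : finrank ℂ (⊤ : Submodule ℂ ℂ) = 1 := by simp
  omega

/-- extract a generator from a 1-dimensional submodule -/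
lemma exists_gen {S : Submodule ℂ (Fin 3 → ℂ)} (hS : finrank ℂ S = 1) :
    ∃ v : Fin 3 → ℂ, v ≠ 0 ∧ v ∈ S ∧ S = Submodule.span ℂ {v} := by
  obtain ⟨v, hv0, hv⟩ := finrank_eq_one_iff'.mp hS
  refine ⟨(v : Fin 3 → ℂ), ?_, v.2, le_antisymm ?_ ?_⟩
  · exact fun hc => hv0 (ZeroMemClass.coe_eq_zero.mp hc)
  · intro w hw
    obtain ⟨c, hc⟩ := hv ⟨w, hw⟩
    have : c • (v : Fin 3 → ℂ) = w := congrArg Subtype.val hc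
    rw [← this]
    exact Submodule.smul_mem _ _ (Submodule.mem_span_singleton_self _)
  · rw [Submodule.span_singleton_le_iff_mem]; exact v.2



lemma neg_def_perp {e : Fin 3 → ℂ} (he : 0 < (h e e).re)
    {z : Fin 3 → ℂ} (hz : h z e = 0) (hz0 : z ≠ 0) : (h z z).re < 0 := by
  set a := e 0 with ha'; set b := e 1 with hb'; set c := e 2 with hc'
  set x := z 0 with hx'; set y := z 1 with hy'; set w := z 2 with hw'
  have hA : Complex.normSq b + Complex.normSq c < Complex.normSq a := by
    rw [h_self, Complex.ofReal_re] at he; linarith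
  have e1 : x * conj a = y * conj b + w * conj c := by
    simp only [h] at hz; linear_combination hz
  have lag : (Complex.normSq (x * conj a) : ℂ) + Complex.normSq (y * c - w * b)
      = ((Complex.normSq y : ℂ) + Complex.normSq w)
        * ((Complex.normSq b : ℂ) + Complex.normSq c) := by
    rw [← Complex.mul_conj, ← Complex.mul_conj, ← Complex.mul_conj, ← Complex.mul_conj,
      ← Complex.mul_conj, ← Complex.mul_conj, e1]
    simp only [map_add, map_sub, map_mul, Complex.conj_conj]
    ring
  have lagR : Complex.normSq x * Complex.normSq a + Complex.normSq (y * c - w * b)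
      = (Complex.normSq y + Complex.normSq w) * (Complex.normSq b + Complex.normSq c) := by
    have := lag
    rw [Complex.normSq_mul, Complex.normSq_conj] at this
    exact_mod_cast this
  rw [h_self, Complex.ofReal_re]
  by_cases hyw : y = 0 ∧ w = 0
  · exfalso
    have hane : a ≠ 0 := by
      intro h0
      rw [h0] at hA
      simp only [Complex.normSq_zero] at hA
      nlinarith [Complex.normSq_nonneg b, Complex.normSq_nonneg c]
    have hx0 : x = 0 := by
      have : x * conj a = 0 := by rw [e1, hyw.1, hyw.2]; ring
      rcases mul_eq_zero.mp this with h0 | h0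
      · exact h0
      · exact absurd (star_eq_zero.mp h0) hane
    apply hz0
    funext i
    fin_cases i
    · exact hx0
    · exact hyw.1
    · exact hyw.2
  · have hpos : 0 < Complex.normSq y + Complex.normSq w := by
      rcases not_and_or.mp hyw with h0 | h0
      · have := Complex.normSq_pos.mpr h0
        nlinarith [Complex.normSq_nonneg w]
      · have := Complex.normSq_pos.mpr h0
        nlinarith [Complex.normSq_nonneg y]
    have hApos : 0 < Complex.normSq a :=
      lt_of_le_of_lt (add_nonneg (Complex.normSq_nonneg b) (Complex.normSq_nonneg c)) hA
    nlinarith [Complex.normSq_nonneg (y * c - w * b), Complex.normSq_nonneg x,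
      mul_pos hpos (sub_pos.mpr hA), hApos, lagR]


lemma h_self_real (v : Fin 3 → ℂ) : h v v = ((h v v).re : ℂ) := by
  rw [h_self, Complex.ofReal_re]

lemma normalize_pos {v : Fin 3 → ℂ} (hv : 0 < (h v v).re) :
    ∃ c : ℂ, c ≠ 0 ∧ h (c • v) (c • v) = 1 := by
  set r := (h v v).re with hr
  have hs : Real.sqrt r * Real.sqrt r = r := Real.mul_self_sqrt hv.le
  have hs0 : Real.sqrt r ≠ 0 := ne_of_gt (Real.sqrt_pos.mpr hv)
  refine ⟨(((Real.sqrt r)⁻¹ : ℝ) : ℂ), Complex.ofReal_ne_zero.mpr (inv_ne_zero hs0), ?_⟩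
  rw [h_smul_smul, Complex.normSq_ofReal, h_self_real v, ← hr]
  have key : (Real.sqrt r)⁻¹ * (Real.sqrt r)⁻¹ * r = 1 := by
    field_simp
    rw [sq, hs]
  push_cast
  exact_mod_cast congrArg (Complex.ofReal) key

lemma normalize_neg {v : Fin 3 → ℂ} (hv : (h v v).re < 0) :
    ∃ c : ℂ, c ≠ 0 ∧ h (c • v) (c • v) = -1 := by
  set r := -(h v v).re with hr
  have hrpos : 0 < r := by simp [hr]; linarith
  have hs : Real.sqrt r * Real.sqrt r = r := Real.mul_self_sqrt hrpos.le
  have hs0 : Real.sqrt r ≠ 0 := ne_of_gt (Real.sqrt_pos.mpr hrpos)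
  refine ⟨(((Real.sqrt r)⁻¹ : ℝ) : ℂ), Complex.ofReal_ne_zero.mpr (inv_ne_zero hs0), ?_⟩
  rw [h_smul_smul, Complex.normSq_ofReal, h_self_real v]
  have hvr : (h v v).re = -r := by rw [hr]; ring
  rw [hvr]
  have key : (Real.sqrt r)⁻¹ * (Real.sqrt r)⁻¹ * (-r) = -1 := by
    field_simp
    rw [sq, hs]
  push_cast
  exact_mod_cast congrArg (Complex.ofReal) key

lemma h_zero_left (w : Fin 3 → ℂ) : h 0 w = 0 := by simp [h]

/-- for a positive line `D₀`, `h` is negative definite on the plane `D₀^⊥`,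
and `D ↦ (D, D ⊔ D₀)` is a bijection from the lines of `D₀^⊥` onto the flags `(D, P)`
with `D` a negative line, `P` of signature (1,1) and `D^⊥ ∩ P = D₀`. -/
theorem twistor_fiber_is_projective_line
    (D₀ : Submodule ℂ (Fin 3 → ℂ))
    (hD₀1 : finrank ℂ D₀ = 1)
    (hD₀pos : ∀ v ∈ D₀, v ≠ 0 → 0 < (h v v).re) :
    (finrank ℂ ↥(perp D₀) = 2 ∧ ∀ v ∈ perp D₀, v ≠ 0 → (h v v).re < 0) ∧
    Set.BijOn (fun D => (D, D ⊔ D₀))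
      {D : Submodule ℂ (Fin 3 → ℂ) | finrank ℂ D = 1 ∧ D ≤ perp D₀}
      {DP : Submodule ℂ (Fin 3 → ℂ) × Submodule ℂ (Fin 3 → ℂ) |
        (finrank ℂ DP.1 = 1 ∧ ∀ v ∈ DP.1, v ≠ 0 → (h v v).re < 0) ∧
        (finrank ℂ DP.2 = 2 ∧ IsSig11 DP.2) ∧
        DP.1 ≤ DP.2 ∧ perp DP.1 ⊓ DP.2 = D₀} := by
  classical
  obtain ⟨e₀, he₀0, he₀mem, hD₀span⟩ := exists_gen hD₀1
  have he₀pos : 0 < (h e₀ e₀).re := hD₀pos e₀ he₀mem he₀0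
  have he₀ne : h e₀ e₀ ≠ 0 := fun h0 => by rw [h0] at he₀pos; simp at he₀pos
  have hperp2 : finrank ℂ ↥(perp D₀) = 2 := by
    rw [hD₀span]; exact finrank_perp_span he₀ne
  have hneg : ∀ v ∈ perp D₀, v ≠ 0 → (h v v).re < 0 := by
    intro v hv hv0
    exact neg_def_perp he₀pos (hv e₀ he₀mem) hv0
  have hdisj : ∀ D : Submodule ℂ (Fin 3 → ℂ),
      (∀ v ∈ D, v ≠ 0 → (h v v).re < 0) → D ⊓ D₀ = ⊥ := by
    intro D hDneg
    rw [Submodule.eq_bot_iff]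
    rintro v ⟨hv1, hv2⟩
    by_contra hv0
    exact absurd (hD₀pos v hv2 hv0) (not_lt.mpr (le_of_lt (hDneg v hv1 hv0)))
  have hsup2 : ∀ D : Submodule ℂ (Fin 3 → ℂ), finrank ℂ D = 1 → D ⊓ D₀ = ⊥ →
      finrank ℂ ↥(D ⊔ D₀) = 2 := by
    intro D h1 hbot
    have := Submodule.finrank_sup_add_finrank_inf_eq D D₀
    rw [hbot, finrank_bot] at this
    omega
  refine ⟨⟨hperp2, hneg⟩, ?_, ?_, ?_⟩
  · -- MapsTo
    rintro D ⟨hD1, hDle⟩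
    have hDneg : ∀ v ∈ D, v ≠ 0 → (h v v).re < 0 := fun v hv hv0 => hneg v (hDle hv) hv0
    have hbot := hdisj D hDneg
    have hP2 := hsup2 D hD1 hbot
    obtain ⟨d, hd0, hdmem, hDspan⟩ := exists_gen hD1
    have hdneg : (h d d).re < 0 := hDneg d hdmem hd0
    have hde₀ : h d e₀ = 0 := hDle hdmem e₀ he₀mem
    have he₀d : h e₀ d = 0 := by rw [← h_conj, hde₀, map_zero]
    obtain ⟨c₁, hc₁0, hc₁⟩ := normalize_pos he₀pos
    obtain ⟨c₂, hc₂0, hc₂⟩ := normalize_neg hdneg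
    obtain ⟨e₁, he₁def⟩ : ∃ e₁, e₁ = c₁ • e₀ := ⟨_, rfl⟩
    obtain ⟨e₂, he₂def⟩ : ∃ e₂, e₂ = c₂ • d := ⟨_, rfl⟩
    rw [← he₁def] at hc₁
    rw [← he₂def] at hc₂
    have he₁D₀ : e₁ ∈ D₀ := he₁def ▸ Submodule.smul_mem _ _ he₀mem
    have he₂D : e₂ ∈ D := he₂def ▸ Submodule.smul_mem _ _ hdmem
    have h12 : h e₁ e₂ = 0 := by
      rw [he₁def, he₂def, h_smul_left, h_smul_right, he₀d]; ring
    have h21 : h e₂ e₁ = 0 := by rw [← h_conj, h12, map_zero]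
    have he₁0 : e₁ ≠ 0 := by
      intro h0
      rw [h0, h_zero_left] at hc₁
      exact one_ne_zero hc₁.symm
    have he₂0 : e₂ ≠ 0 := by
      intro h0
      rw [h0, h_zero_left] at hc₂
      norm_num at hc₂
    have hspan : Submodule.span ℂ {e₁, e₂} = D ⊔ D₀ := by
      rw [Submodule.span_insert, he₁def, he₂def, Submodule.span_singleton_smul_eq (hc₁0.isUnit),
        Submodule.span_singleton_smul_eq (hc₂0.isUnit), ← hD₀span, ← hDspan, sup_comm]
    have hlin : LinearIndependent ℂ ![e₁, e₂] := by
      rw [LinearIndependent.pair_iff]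
      intro s t hst
      have hs : s = 0 := by
        have := congrArg (fun z => h z e₁) hst
        simp only [h_add_left, h_smul_left, h_zero_left] at this
        rw [hc₁, h21] at this
        simpa using this
      refine ⟨hs, ?_⟩
      have := congrArg (fun z => h z e₂) hst
      simp only [h_add_left, h_smul_left, h_zero_left] at this
      rw [hc₂, h12] at this
      rw [hs] at this
      simp at this
      exact this
    have hperpP : perp D ⊓ (D ⊔ D₀) = D₀ := by
      apply le_antisymm
      · intro p hp
        obtain ⟨hp1, hp2⟩ := Submodule.mem_inf.mp hp
        rw [← hspan] at hp2
        obtain ⟨a, b, rfl⟩ := Submodule.mem_span_pair.mp hp2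
        have hb : b = 0 := by
          have := hp1 e₂ he₂D
          rw [h_add_left, h_smul_left, h_smul_left, hc₂, h12] at this
          simpa using this
        rw [hb]
        simp only [zero_smul, add_zero]
        exact Submodule.smul_mem _ _ he₁D₀
      · refine le_inf ?_ le_sup_right
        intro v hv u hu
        rw [← h_conj u v, hDle hu v hv, map_zero]
    exact ⟨⟨hD1, hDneg⟩, ⟨hP2, e₁, e₂, Submodule.mem_sup_right he₁D₀, Submodule.mem_sup_left he₂D,
      hlin, hspan, hc₁, hc₂, h12⟩, le_sup_left, hperpP⟩
  · -- InjOn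
    intro D₁ _ D₂ _ heq
    exact (Prod.ext_iff.mp heq).1
  · -- SurjOn
    rintro ⟨D, P⟩ ⟨⟨hD1, hDneg⟩, ⟨hP2, _⟩, hDP, hperpD⟩
    have hDle : D ≤ perp D₀ := by
      intro d hd v hv
      have hv' : v ∈ perp D ⊓ P := hperpD.symm ▸ hv
      rw [← h_conj v d, hv'.1 d hd, map_zero]
    have hsup : D ⊔ D₀ = P := by
      apply Submodule.eq_of_le_of_finrank_eq
      · exact sup_le hDP (hperpD ▸ inf_le_right)
      · rw [hP2, hsup2 D hD1 (hdisj D hDneg)]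
    exact ⟨D, ⟨hD1, hDle⟩, by simp [hsup]⟩
end

section
/- Define λ : ℂ⁴ → (ℂ⁴ →L[ℂ] ℂ) by λ(σ,u,v,z)(Y) = Y_σ + (1/(2i))(v·Y_u − u·Y_v) + z·Y_u, and the vector field X_H : ℂ⁴ → ℂ⁴ by X_H(σ,u,v,z) = (u/(2i), 0, 1, i). Then for every p = (σ,u,v,z) ∈ ℂ⁴: (a) λ(p)(X_H(p)) = 0, and (b) for all Y ∈ ℂ⁴, (fderiv λ p (X_H(p)))(Y) − (fderiv λ p Y)(X_H(p)) = 0. (Equations (10) and (19): X_H is the horizontal lift of the (0,1)-vector ∂_v + (u/2i)∂_σ, characterized by i_{X_H} dλ = 0.) -/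
open Complex

/-- The horizontal vector field `X_H(σ,u,v,z) = (u/(2i), 0, 1, i)` on ℂ⁴,
with coordinates `(σ,u,v,z) = (p 0, p 1, p 2, p 3)`. -/
noncomputable def XH (p : Fin 4 → ℂ) : Fin 4 → ℂ :=
  ![p 1 / (2 * I), 0, 1, I]

/-- The linear part of the Liouville form, as a bilinear continuous map. -/
noncomputable def lamLin : (Fin 4 → ℂ) →L[ℂ] ((Fin 4 → ℂ) →L[ℂ] ℂ) :=
  LinearMap.toContinuousLinearMap
    { toFun := fun p => LinearMap.toContinuousLinearMap
        { toFun := fun Y => (1 / (2 * I)) * (p 2 * Y 1 - p 1 * Y 2) + p 3 * Y 1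
          map_add' := by intro Y Z; simp [Pi.add_apply]; ring
          map_smul' := by intro c Y; simp [Pi.smul_apply, smul_eq_mul]; ring }
      map_add' := by
        intro p q; ext Y
        simp [Pi.add_apply, LinearMap.coe_mk, AddHom.coe_mk]
        ring
      map_smul' := by
        intro c p; ext Y
        simp [Pi.smul_apply, smul_eq_mul]
        ring }

noncomputable def lamConst : (Fin 4 → ℂ) →L[ℂ] ℂ :=
  LinearMap.toContinuousLinearMap
    { toFun := fun Y => Y 0
      map_add' := by intro Y Z; simp
      map_smul' := by intro c Y; simp }

lemma lamLin_apply (p Y : Fin 4 → ℂ) :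
    lamLin p Y = (1 / (2 * I)) * (p 2 * Y 1 - p 1 * Y 2) + p 3 * Y 1 := rfl

/-- for the Liouville form
`λ(σ,u,v,z)(Y) = Y_σ + (1/2i)(v Y_u − u Y_v) + z Y_u` and the vector field
`X_H(σ,u,v,z) = (u/(2i), 0, 1, i)`, one has `λ(X_H) = 0` and `i_{X_H} dλ = 0`
(equations (10) and (19)). -/
theorem horizontal_lift_annihilates_liouville
    (lam : (Fin 4 → ℂ) → ((Fin 4 → ℂ) →L[ℂ] ℂ))
    (hlam : ∀ p Y, lam p Y
      = Y 0 + (1 / (2 * I)) * (p 2 * Y 1 - p 1 * Y 2) + p 3 * Y 1) :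
    ∀ p : Fin 4 → ℂ,
      lam p (XH p) = 0 ∧
      ∀ Y : Fin 4 → ℂ,
        (fderiv ℂ lam p (XH p)) Y - (fderiv ℂ lam p Y) (XH p) = 0 := by
  have hI : (2 * I) ≠ 0 := by simp [I_ne_zero]
  have hlam_eq : lam = fun p => lamConst + lamLin p := by
    funext p; ext Y
    rw [hlam p Y]
    simp [lamConst, lamLin_apply]
    ring
  intro p
  constructor
  · rw [hlam p (XH p)]
    simp [XH]
    field_simp
    ring_nf
    simp [I_sq]
  · intro Y
    have hfd : fderiv ℂ lam p = lamLin := by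
      rw [hlam_eq]
      have : HasFDerivAt (fun p => lamConst + lamLin p) lamLin p := by
        have h := (hasFDerivAt_const lamConst p).add lamLin.hasFDerivAt
        rw [zero_add] at h
        exact h
      exact this.fderiv
    rw [hfd, lamLin_apply, lamLin_apply]
    simp [XH]
    field_simp
    ring
end
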